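/- In a Radon plane, the constant c_t satisfies c_t(‖·‖) ≥ 3/4; that is, for every equilateral triangle Δ with unit sides, the sine s(Δ) of its sides is at least 3/4. -/

import Mathlib

open Module

variable {V : Type*} [NormedAddCommGroup V] [NormedSpace ℝ V]

noncomputable def sine {V : Type*} [NormedAddCommGroup V] [NormedSpace ℝ V] (x y : V) : ℝ :=
  ⨅ t : ℝ, ‖x + t • y‖

def BOrth {V : Type*} [NormedAddCommGroup V] [NormedSpace ℝ V] (x y : V) : Prop :=
  ∀ t : ℝ, ‖x‖ ≤ ‖x + t • y‖

noncomputable def cD (V : Type*) [NormedAddCommGroup V] [NormedSpace ℝ V] : ℝ :=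
  sInf {r : ℝ | ∃ x y : V, ‖x‖ = 1 ∧ ‖y‖ = 1 ∧ BOrth x y ∧ r = sine y x}

noncomputable def cR (V : Type*) [NormedAddCommGroup V] [NormedSpace ℝ V] : ℝ :=
  sSup {r : ℝ | ∃ x y : V, ‖x‖ = 1 ∧ ‖y‖ = 1 ∧ r = |sine x y - sine y x|}

namespace RadonSine

variable (B : Basis (Fin 2) ℝ V)

noncomputable def om (u v : V) : ℝ :=
  B.repr u 0 * B.repr v 1 - B.repr u 1 * B.repr v 0

lemma om_add_left (u u' v : V) : om B (u + u') v = om B u v + om B u' v := by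
  simp [om]; ring

lemma om_add_right (u v v' : V) : om B u (v + v') = om B u v + om B u v' := by
  simp [om]; ring

lemma om_smul_left (c : ℝ) (u v : V) : om B (c • u) v = c * om B u v := by
  simp [om]; ring

lemma om_smul_right (c : ℝ) (u v : V) : om B u (c • v) = c * om B u v := by
  simp [om]; ring

lemma om_self (u : V) : om B u u = 0 := by simp [om]; ring

lemma om_swap (u v : V) : om B u v = -om B v u := by simp [om]; ring

lemma om_zero_left (v : V) : om B 0 v = 0 := by simp [om]

lemma om_neg_right (u v : V) : om B u (-v) = -om B u v := by
  simp [om]; ring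

lemma om_sub_right (u v v' : V) : om B u (v - v') = om B u v - om B u v' := by
  simp [om]; ring

lemma om_eq_zero_imp {u v : V} (hv : v ≠ 0) (h : om B u v = 0) : ∃ c : ℝ, u = c • v := by
  have hvr : B.repr v ≠ 0 := fun hh => hv (by simpa using B.repr.map_eq_zero_iff.mp hh)
  have : B.repr v 0 ≠ 0 ∨ B.repr v 1 ≠ 0 := by
    by_contra hc
    push_neg at hc
    apply hvr
    ext i
    fin_cases i <;> simp [hc.1, hc.2]
  simp only [om, sub_eq_zero] at h
  rcases this with h0 | h1
  · refine ⟨B.repr u 0 / B.repr v 0, B.repr.injective ?_⟩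
    rw [map_smul]
    ext i
    fin_cases i <;> simp [Finsupp.smul_apply, smul_eq_mul]
    · field_simp
    · field_simp
      nlinarith [h]
  · refine ⟨B.repr u 1 / B.repr v 1, B.repr.injective ?_⟩
    rw [map_smul]
    ext i
    fin_cases i <;> simp [Finsupp.smul_apply, smul_eq_mul]
    · field_simp
      nlinarith [h]
    · field_simp

-- decomposition
lemma om_decompose {u v : V} (h : om B u v ≠ 0) (w : V) :
    ∃ α β : ℝ, w = α • u + β • v := by
  have hv : v ≠ 0 := by
    rintro rfl
    simp [om] at h
  set α := om B w v / om B u v with hα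
  set β := om B u w / om B u v with hβ
  refine ⟨α, β, ?_⟩
  set w' := w - α • u - β • v with hw'
  have h1 : om B w' v = 0 := by
    simp only [hw', om, map_sub, map_smul, Finsupp.sub_apply, Finsupp.smul_apply, smul_eq_mul]
    simp only [hα, hβ, om] at *
    linear_combination (-((B.repr w) 0 * (B.repr v) 1 - (B.repr w) 1 * (B.repr v) 0)) * mul_inv_cancel₀ h
  have h2 : om B u w' = 0 := by
    simp only [hw', om, map_sub, map_smul, Finsupp.sub_apply, Finsupp.smul_apply, smul_eq_mul]
    simp only [hα, hβ, om] at *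
    linear_combination (-((B.repr u) 0 * (B.repr w) 1 - (B.repr u) 1 * (B.repr w) 0)) * mul_inv_cancel₀ h
  obtain ⟨c, hc⟩ := om_eq_zero_imp B hv h1
  have : c * om B u v = 0 := by
    have := h2
    rw [hc] at this
    rwa [om_smul_right] at this
  have hc0 : c = 0 := by
    rcases mul_eq_zero.mp this with h' | h'
    · exact h'
    · exact absurd h' h
  have hz : w' = 0 := by rw [hc, hc0, zero_smul]
  rw [hw', sub_sub, sub_eq_zero] at hz
  exact hz

-- boundedness
lemma om_bound [FiniteDimensional ℝ V] :
    ∃ K : ℝ, 0 < K ∧ ∀ u v : V, |om B u v| ≤ K * ‖u‖ * ‖v‖ := by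
  let c0 : V →L[ℝ] ℝ := LinearMap.toContinuousLinearMap (B.coord 0)
  let c1 : V →L[ℝ] ℝ := LinearMap.toContinuousLinearMap (B.coord 1)
  refine ⟨‖c0‖ * ‖c1‖ + ‖c1‖ * ‖c0‖ + 1, by positivity, fun u v => ?_⟩
  have h0 : ∀ w : V, |B.repr w 0| ≤ ‖c0‖ * ‖w‖ := fun w => by
    simpa [c0, Basis.coord_apply] using c0.le_opNorm w
  have h1 : ∀ w : V, |B.repr w 1| ≤ ‖c1‖ * ‖w‖ := fun w => by
    simpa [c1, Basis.coord_apply] using c1.le_opNorm w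
  have := abs_sub (B.repr u 0 * B.repr v 1) (B.repr u 1 * B.repr v 0)
  calc |om B u v| ≤ |B.repr u 0 * B.repr v 1| + |B.repr u 1 * B.repr v 0| := abs_sub _ _
    _ = |B.repr u 0| * |B.repr v 1| + |B.repr u 1| * |B.repr v 0| := by rw [abs_mul, abs_mul]
    _ ≤ (‖c0‖ * ‖u‖) * (‖c1‖ * ‖v‖) + (‖c1‖ * ‖u‖) * (‖c0‖ * ‖v‖) := by
        have b1 := mul_le_mul (h0 u) (h1 v) (abs_nonneg _) (by positivity)
        have b2 := mul_le_mul (h1 u) (h0 v) (abs_nonneg _) (by positivity)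
        linarith
    _ ≤ (‖c0‖ * ‖c1‖ + ‖c1‖ * ‖c0‖ + 1) * ‖u‖ * ‖v‖ := by nlinarith [norm_nonneg u, norm_nonneg v]

noncomputable def anorm (v : V) : ℝ :=
  sSup ((fun w => |om B w v|) '' Metric.closedBall (0 : V) 1)

section AnormBasic
variable {K : ℝ} (hK0 : 0 ≤ K) (hK : ∀ u v : V, |om B u v| ≤ K * ‖u‖ * ‖v‖)

lemma anorm_set_nonempty (v : V) :
    ((fun w => |om B w v|) '' Metric.closedBall (0 : V) 1).Nonempty :=
  ⟨|om B 0 v|, 0, by simp, rfl⟩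

include hK0 hK in
lemma anorm_bddAbove (v : V) :
    BddAbove ((fun w => |om B w v|) '' Metric.closedBall (0 : V) 1) := by
  refine ⟨K * ‖v‖, ?_⟩
  rintro r ⟨w, hw, rfl⟩
  rw [Metric.mem_closedBall, dist_zero_right] at hw
  calc |om B w v| ≤ K * ‖w‖ * ‖v‖ := hK w v
    _ ≤ K * 1 * ‖v‖ := by gcongr
    _ = K * ‖v‖ := by ring

include hK0 hK in
lemma le_anorm {w : V} (hw : ‖w‖ ≤ 1) (v : V) : |om B w v| ≤ anorm B v :=
  le_csSup (anorm_bddAbove B hK0 hK v) ⟨w, by simpa [Metric.mem_closedBall, dist_zero_right], rfl⟩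

lemma anorm_le {v : V} {M : ℝ} (h : ∀ w : V, ‖w‖ ≤ 1 → |om B w v| ≤ M) : anorm B v ≤ M := by
  apply csSup_le (anorm_set_nonempty B v)
  rintro r ⟨w, hw, rfl⟩
  rw [Metric.mem_closedBall, dist_zero_right] at hw
  exact h w hw

include hK0 hK in
lemma anorm_nonneg (v : V) : 0 ≤ anorm B v := by
  have := le_anorm B hK0 hK (w := 0) (by simp) v
  simpa [om_zero_left] using this

include hK0 hK in
lemma anorm_le_K (v : V) : anorm B v ≤ K * ‖v‖ := by
  apply anorm_le
  intro w hw
  calc |om B w v| ≤ K * ‖w‖ * ‖v‖ := hK w v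
    _ ≤ K * 1 * ‖v‖ := by gcongr
    _ = K * ‖v‖ := by ring

lemma anorm_neg (v : V) : anorm B (-v) = anorm B v := by
  have h : ∀ w : V, |om B w (-v)| = |om B w v| := by
    intro w
    rw [show om B w (-v) = -(om B w v) by simp [om]; ring, abs_neg]
  unfold anorm
  simp only [h]

include hK0 hK in
lemma anorm_attain {w p : V} (hw : ‖w‖ = 1) (hBO : BOrth w p) (hne : om B w p ≠ 0) :
    anorm B p = |om B w p| := by
  refine le_antisymm (anorm_le B ?_) (le_anorm B hK0 hK (le_of_eq hw) p)
  intro u hu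
  obtain ⟨α, β, rfl⟩ := om_decompose B hne u
  have homval : om B (α • w + β • p) p = α * om B w p := by
    simp [om]; ring
  rw [homval, abs_mul]
  have hαle : |α| ≤ 1 := by
    rcases eq_or_ne α 0 with h | h
    · simp [h]
    · have : α • w + β • p = α • (w + (β / α) • p) := by
        rw [smul_add, smul_smul]
        congr 2
        field_simp
      have h2 : ‖α • w + β • p‖ = |α| * ‖w + (β / α) • p‖ := by
        rw [this, norm_smul, Real.norm_eq_abs]
      have h3 := hBO (β / α)
      rw [hw] at h3
      calc |α| = |α| * 1 := (mul_one _).symm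
        _ ≤ |α| * ‖w + (β / α) • p‖ := by gcongr
        _ = ‖α • w + β • p‖ := h2.symm
        _ ≤ 1 := hu
  nlinarith [abs_nonneg (om B w p), abs_nonneg α]

end AnormBasic

set_option maxHeartbeats 2000000 in
lemma anorm_mono (hRadon : ∀ u v : V, BOrth u v → BOrth v u)
    {K : ℝ} (hKpos : 0 < K) (hK : ∀ u v : V, |om B u v| ≤ K * ‖u‖ * ‖v‖)
    {x y : V} (hxy : om B x y ≠ 0) (hx : ‖x‖ = 1) (hy : ‖y‖ = 1) :
    anorm B x ≤ anorm B y := by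
  have hK0 : 0 ≤ K := le_of_lt hKpos
  set e : V := y - x with he
  set d : ℝ → V := fun t => x + t • e with hd
  set Nb : ℝ → ℝ := fun t => ‖d t‖ with hNb
  set D : ℝ := |om B x y| with hD
  have hDpos : 0 < D := abs_pos.mpr hxy
  -- omega computations
  have h_om_e_d : ∀ t : ℝ, om B e (d t) = -om B x y := by
    intro t
    simp only [om, hd, he, map_add, map_sub, map_smul, Finsupp.add_apply, Finsupp.sub_apply,
      Finsupp.smul_apply, smul_eq_mul]
    ring
  have h_om_d_y : ∀ t : ℝ, om B (d t) y = (1 - t) * om B x y := by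
    intro t
    simp only [om, hd, he, map_add, map_sub, map_smul, Finsupp.add_apply, Finsupp.sub_apply,
      Finsupp.smul_apply, smul_eq_mul]
    ring
  have h_om_d_x : ∀ t : ℝ, om B (d t) x = -t * om B x y := by
    intro t
    simp only [om, hd, he, map_add, map_sub, map_smul, Finsupp.add_apply, Finsupp.sub_apply,
      Finsupp.smul_apply, smul_eq_mul]
    ring
  have hdsub : ∀ s t : ℝ, d s - d t = (s - t) • e := by
    intro s t
    simp only [hd]
    module
  have hlip : ∀ s t : ℝ, |Nb s - Nb t| ≤ |s - t| * ‖e‖ := by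
    intro s t
    calc |Nb s - Nb t| ≤ ‖d s - d t‖ := abs_norm_sub_norm_le _ _
      _ = |s - t| * ‖e‖ := by rw [hdsub, norm_smul, Real.norm_eq_abs]
  have hnmin : ∀ t : ℝ, 0 ≤ t → t ≤ 1 → D / (2 * K) ≤ Nb t := by
    intro t ht0 ht1
    rcases le_or_gt t (1/2) with hhalf | hhalf
    · have h1 := hK (d t) y
      rw [h_om_d_y, abs_mul, hy, mul_one] at h1
      have h2 : (1 - t) * D ≤ K * Nb t := by
        rw [abs_of_nonneg (by linarith)] at h1
        exact h1
      rw [div_le_iff₀ (by positivity)]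
      nlinarith
    · have h1 := hK (d t) x
      rw [h_om_d_x, abs_mul, hx, mul_one] at h1
      have h2 : t * D ≤ K * Nb t := by
        rw [abs_of_nonpos (by linarith), neg_neg] at h1
        exact h1
      rw [div_le_iff₀ (by positivity)]
      nlinarith
  have hNbnonneg : ∀ t : ℝ, 0 ≤ Nb t := fun t => norm_nonneg _
  -- convexity, slope form
  have hconv : ∀ a b c : ℝ, a < b → b < c → (Nb b - Nb a) * (c - b) ≤ (Nb c - Nb b) * (b - a) := by
    intro a b c hab hbc
    have hcomb : (c - a) • d b = (c - b) • d a + (b - a) • d c := by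
      simp only [hd]
      match_scalars <;> ring
    have h1 : (c - a) * Nb b ≤ (c - b) * Nb a + (b - a) * Nb c := by
      have := norm_add_le ((c - b) • d a) ((b - a) • d c)
      rw [← hcomb] at this
      rw [norm_smul, norm_smul, norm_smul] at this
      rw [Real.norm_eq_abs, Real.norm_eq_abs, Real.norm_eq_abs] at this
      rw [abs_of_pos (by linarith), abs_of_pos (by linarith), abs_of_pos (by linarith)] at this
      exact this
    nlinarith
  -- subgradient existence
  have hsubgrad : ∀ t₀ : ℝ, ∃ r : ℝ, |r| ≤ ‖e‖ ∧ (∀ t, Nb t₀ + (t - t₀) * r ≤ Nb t) ∧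
      (∀ s, s < t₀ → Nb t₀ - Nb s ≤ (t₀ - s) * r) := by
    intro t₀
    set S : Set ℝ := (fun s => (Nb t₀ - Nb s) / (t₀ - s)) '' Set.Iio t₀ with hS
    have hSne : S.Nonempty := ⟨_, t₀ - 1, by simp, rfl⟩
    have hub : ∀ z ∈ S, z ≤ Nb (t₀ + 1) - Nb t₀ := by
      rintro z ⟨s, hs, rfl⟩
      rw [Set.mem_Iio] at hs
      rw [div_le_iff₀ (by linarith)]
      have := hconv s t₀ (t₀ + 1) hs (by linarith)
      nlinarith
    have hbdd : BddAbove S := ⟨_, hub⟩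
    set r : ℝ := sSup S with hr
    have third : ∀ s, s < t₀ → Nb t₀ - Nb s ≤ (t₀ - s) * r := by
      intro s hs
      have hmem : (Nb t₀ - Nb s) / (t₀ - s) ≤ r :=
        le_csSup hbdd ⟨s, Set.mem_Iio.mpr hs, rfl⟩
      rw [div_le_iff₀ (by linarith)] at hmem
      nlinarith
    have second : ∀ t, Nb t₀ + (t - t₀) * r ≤ Nb t := by
      intro t
      rcases lt_trichotomy t t₀ with h | h | h
      · have := third t h
        nlinarith
      · rw [h]; simp
      · have hle : r ≤ (Nb t - Nb t₀) / (t - t₀) := by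
          apply csSup_le hSne
          rintro z ⟨s, hs, rfl⟩
          rw [Set.mem_Iio] at hs
          rw [div_le_div_iff₀ (by linarith) (by linarith)]
          have := hconv s t₀ t hs h
          nlinarith
        rw [le_div_iff₀ (by linarith)] at hle
        nlinarith
    have habs : |r| ≤ ‖e‖ := by
      rw [abs_le]
      constructor
      · have hmem : (Nb t₀ - Nb (t₀ - 1)) / (t₀ - (t₀ - 1)) ≤ r :=
          le_csSup hbdd ⟨t₀ - 1, by simp, rfl⟩
        have h4 : t₀ - (t₀ - 1) = 1 := by ring
        rw [h4, div_one] at hmem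
        have h2 : |Nb t₀ - Nb (t₀ - 1)| ≤ |t₀ - (t₀ - 1)| * ‖e‖ := hlip _ _
        rw [h4, abs_one, one_mul] at h2
        linarith [neg_abs_le (Nb t₀ - Nb (t₀ - 1))]
      · apply csSup_le hSne
        rintro z ⟨s, hs, rfl⟩
        rw [Set.mem_Iio] at hs
        rw [div_le_iff₀ (by linarith)]
        have h2 := hlip t₀ s
        have h3 : |t₀ - s| = t₀ - s := abs_of_pos (by linarith)
        rw [h3] at h2
        nlinarith [le_abs_self (Nb t₀ - Nb s)]
    exact ⟨r, habs, second, third⟩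
  -- the step inequality
  have he0 : e ≠ 0 := by
    intro h
    have h1 := h_om_e_d 0
    rw [h, om_zero_left] at h1
    exact hxy (by linarith [h1] )
  have hepos : 0 < ‖e‖ := norm_pos_iff.mpr he0
  have hstep : ∀ t₀ r : ℝ, 0 < Nb t₀ → |r| ≤ ‖e‖ → (∀ t, Nb t₀ + (t - t₀) * r ≤ Nb t) →
      ∀ t' : ℝ, anorm B (d t₀) * (Nb t₀ + (t' - t₀) * r) ≤ anorm B (d t') * Nb t₀ := by
    intro t₀ r ht₀pos hrabs hsub t'
    set L : ℝ → ℝ := fun t => Nb t₀ + (t - t₀) * r with hL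
    have hLlow : ∀ t, -Nb t ≤ L t := by
      intro t
      have h1 : ‖d t - d t₀‖ ≤ Nb t + Nb t₀ := by
        calc ‖d t - d t₀‖ ≤ ‖d t‖ + ‖d t₀‖ := norm_sub_le _ _
          _ = Nb t + Nb t₀ := rfl
      have h2 : ‖d t - d t₀‖ = |t - t₀| * ‖e‖ := by
        rw [hdsub, norm_smul, Real.norm_eq_abs]
      have h3 : |(t - t₀) * r| ≤ |t - t₀| * ‖e‖ := by
        rw [abs_mul]
        exact mul_le_mul_of_nonneg_left hrabs (abs_nonneg _)
      have h4 := neg_abs_le ((t - t₀) * r)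
      simp only [hL]
      nlinarith
    have hgd : ∀ γ σ : ℝ, γ • d (t₀ + σ) = γ • d t₀ + (γ * σ) • e := by
      intro γ σ
      simp only [hd]
      module
    set w₀ : V := Nb t₀ • e - r • d t₀ with hw₀
    have hom_w₀ : ∀ t : ℝ, om B w₀ (d t) = (L t) * om B e (d t₀) := by
      intro t
      have hdt : d t = d t₀ + (t - t₀) • e := by
        simp only [hd]; module
      rw [hdt]
      simp only [hw₀, hL, om, map_add, map_sub, map_smul, Finsupp.add_apply, Finsupp.sub_apply,
        Finsupp.smul_apply, smul_eq_mul]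
      ring
    have homed : om B e (d t₀) ≠ 0 := by
      rw [h_om_e_d t₀]
      exact neg_ne_zero.mpr hxy
    have hw₀om : om B w₀ (d t₀) ≠ 0 := by
      rw [hom_w₀ t₀]
      simp only [hL, sub_self, zero_mul, add_zero]
      exact mul_ne_zero (ne_of_gt ht₀pos) homed
    have hw₀ne : w₀ ≠ 0 := by
      intro h
      rw [h, om_zero_left] at hw₀om
      exact hw₀om rfl
    have hw₀pos : 0 < ‖w₀‖ := norm_pos_iff.mpr hw₀ne
    set wh : V := ‖w₀‖⁻¹ • w₀ with hwh
    have hwh1 : ‖wh‖ = 1 := norm_smul_inv_norm hw₀ne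
    have hBO1 : BOrth (d t₀) wh := by
      intro s
      set s' : ℝ := s * ‖w₀‖⁻¹ with hs'
      have hvec : d t₀ + s • wh = (1 - s' * r) • d t₀ + (s' * Nb t₀) • e := by
        simp only [hwh, hw₀, hs']
        match_scalars <;> ring
      rw [hvec]
      set γ : ℝ := 1 - s' * r with hγ
      show Nb t₀ ≤ _
      rcases lt_trichotomy γ 0 with hγ0 | hγ0 | hγ0
      · set σ : ℝ := s' * Nb t₀ / γ with hσ
        have hγne : γ ≠ 0 := ne_of_lt hγ0
        have hγσ : γ * σ = s' * Nb t₀ := by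
          rw [hσ, mul_div_cancel₀ _ hγne]
        have hvec2 : γ • d t₀ + (s' * Nb t₀) • e = γ • d (t₀ + σ) := by
          rw [hgd γ σ, hγσ]
        rw [hvec2, norm_smul, Real.norm_eq_abs, abs_of_neg hγ0]
        have h5 := hLlow (t₀ + σ)
        have h6 : -γ * (-(L (t₀ + σ))) ≤ -γ * Nb (t₀ + σ) := by
          apply mul_le_mul_of_nonneg_left _ (by linarith)
          linarith
        have h8 : γ * L (t₀ + σ) = Nb t₀ := by
          simp only [hL]
          have ht : t₀ + σ - t₀ = σ := by ring
          rw [ht]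
          linear_combination Nb t₀ * hγ + r * hγσ
        linarith
      · have hs'r : s' * r = 1 := by
          simp only [hγ] at hγ0
          linarith
        have hvec2 : γ • d t₀ + (s' * Nb t₀) • e = (s' * Nb t₀) • e := by
          rw [hγ0, zero_smul, zero_add]
        rw [hvec2, norm_smul, Real.norm_eq_abs, abs_mul]
        have hr0 : r ≠ 0 := by
          intro h
          rw [h, mul_zero] at hs'r
          norm_num at hs'r
        have hs'abs : |s'| * |r| = 1 := by
          rw [← abs_mul, hs'r, abs_one]
        have h9 : 1 ≤ |s'| * ‖e‖ := by
          have h10 : |s'| * |r| ≤ |s'| * ‖e‖ := mul_le_mul_of_nonneg_left hrabs (abs_nonneg _)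
          linarith
        have h11 : |Nb t₀| = Nb t₀ := abs_of_pos ht₀pos
        calc Nb t₀ = 1 * Nb t₀ := (one_mul _).symm
          _ ≤ (|s'| * ‖e‖) * Nb t₀ := mul_le_mul_of_nonneg_right h9 (le_of_lt ht₀pos)
          _ = |s'| * |Nb t₀| * ‖e‖ := by rw [h11]; ring
      · set σ : ℝ := s' * Nb t₀ / γ with hσ
        have hγne : γ ≠ 0 := ne_of_gt hγ0
        have hγσ : γ * σ = s' * Nb t₀ := by
          rw [hσ, mul_div_cancel₀ _ hγne]
        have hvec2 : γ • d t₀ + (s' * Nb t₀) • e = γ • d (t₀ + σ) := by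
          rw [hgd γ σ, hγσ]
        rw [hvec2, norm_smul, Real.norm_eq_abs, abs_of_pos hγ0]
        have h5 := hsub (t₀ + σ)
        have h6 : γ * (Nb t₀ + (t₀ + σ - t₀) * r) ≤ γ * Nb (t₀ + σ) :=
          mul_le_mul_of_nonneg_left h5 (le_of_lt hγ0)
        have h8 : γ * (Nb t₀ + (t₀ + σ - t₀) * r) = Nb t₀ := by
          have ht : t₀ + σ - t₀ = σ := by ring
          rw [ht]
          linear_combination Nb t₀ * hγ + r * hγσ
        linarith
    have hBO2 : BOrth wh (d t₀) := hRadon _ _ hBO1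
    have hwhom : om B wh (d t₀) ≠ 0 := by
      simp only [hwh, om_smul_left]
      exact mul_ne_zero (inv_ne_zero (ne_of_gt hw₀pos)) hw₀om
    have hattain : anorm B (d t₀) = |om B wh (d t₀)| := anorm_attain B hK0 hK hwh1 hBO2 hwhom
    have homwh : ∀ t : ℝ, om B wh (d t) = ‖w₀‖⁻¹ * (L t * om B e (d t₀)) := by
      intro t
      simp only [hwh, om_smul_left, hom_w₀]
    have h1 : |om B wh (d t')| ≤ anorm B (d t') := le_anorm B hK0 hK (le_of_eq hwh1) _
    have hQ : 0 < |om B e (d t₀)| := abs_pos.mpr homed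
    have hLt₀ : L t₀ = Nb t₀ := by simp only [hL]; ring
    have hanormval : anorm B (d t₀) = ‖w₀‖⁻¹ * (Nb t₀ * |om B e (d t₀)|) := by
      rw [hattain, homwh t₀, hLt₀]
      rw [abs_mul, abs_mul, abs_of_pos (inv_pos.mpr hw₀pos), abs_of_pos ht₀pos]
    rcases le_or_gt (L t') 0 with hLt' | hLt'
    · have hl : anorm B (d t₀) * L t' ≤ 0 :=
        mul_nonpos_of_nonneg_of_nonpos (anorm_nonneg B hK0 hK _) hLt'
      have hrr : 0 ≤ anorm B (d t') * Nb t₀ :=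
        mul_nonneg (anorm_nonneg B hK0 hK _) (hNbnonneg t₀)
      calc anorm B (d t₀) * (Nb t₀ + (t' - t₀) * r) = anorm B (d t₀) * L t' := rfl
        _ ≤ 0 := hl
        _ ≤ anorm B (d t') * Nb t₀ := hrr
    · have h2 : |om B wh (d t')| = ‖w₀‖⁻¹ * (L t' * |om B e (d t₀)|) := by
        rw [homwh t', abs_mul, abs_mul, abs_of_pos (inv_pos.mpr hw₀pos), abs_of_pos hLt']
      calc anorm B (d t₀) * (Nb t₀ + (t' - t₀) * r)
          = (‖w₀‖⁻¹ * (Nb t₀ * |om B e (d t₀)|)) * L t' := by rw [hanormval]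
        _ = (‖w₀‖⁻¹ * (L t' * |om B e (d t₀)|)) * Nb t₀ := by ring
        _ = |om B wh (d t')| * Nb t₀ := by rw [h2]
        _ ≤ anorm B (d t') * Nb t₀ := mul_le_mul_of_nonneg_right h1 (hNbnonneg t₀)
  -- the chain
  set C : ℝ := 2 * K ^ 2 / D with hC
  have hCpos : 0 < C := by positivity
  have hchain : ∀ n : ℕ, 0 < n → anorm B x - anorm B y ≤ 2 * C * ‖e‖ / n := by
    intro n hn
    have hnR : (0:ℝ) < n := Nat.cast_pos.mpr hn
    set τ : ℕ → ℝ := fun k => (k : ℝ) / n with hτ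
    have hτmem : ∀ k : ℕ, k ≤ n → 0 ≤ τ k ∧ τ k ≤ 1 := by
      intro k hk
      refine ⟨by positivity, ?_⟩
      rw [hτ]
      rw [div_le_one hnR]
      exact_mod_cast hk
    have hτsucc : ∀ k : ℕ, τ (k + 1) - τ k = 1 / n := by
      intro k
      simp only [hτ]
      push_cast
      field_simp
      ring
    have hτlt : ∀ k : ℕ, τ k < τ (k + 1) := by
      intro k
      have h1 := hτsucc k
      have h2 : (0:ℝ) < 1 / n := by positivity
      linarith
    choose r hr1 hr2 hr3 using hsubgrad
    set G : ℕ → ℝ := fun k => anorm B (d (τ k)) / Nb (τ k) with hG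
    have hNbτpos : ∀ k : ℕ, k ≤ n → 0 < Nb (τ k) := fun k hk =>
      lt_of_lt_of_le (by positivity) (hnmin _ (hτmem k hk).1 (hτmem k hk).2)
    have hstep2 : ∀ k : ℕ, k + 1 ≤ n →
        G k - C * (Nb (τ (k + 1)) - Nb (τ k) - 1 / n * r (τ k)) ≤ G (k + 1) := by
      intro k hk
      have hk' : k ≤ n := Nat.le_of_succ_le hk
      have hm : 0 < Nb (τ k) := hNbτpos k hk'
      have hm' : 0 < Nb (τ (k + 1)) := hNbτpos (k + 1) hk
      have h1 : anorm B (d (τ k)) * (Nb (τ k) + (τ (k + 1) - τ k) * r (τ k)) ≤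
          anorm B (d (τ (k + 1))) * Nb (τ k) :=
        hstep (τ k) (r (τ k)) hm (hr1 _) (hr2 _) (τ (k + 1))
      rw [hτsucc k] at h1
      set a : ℝ := anorm B (d (τ k)) with ha'
      set a' : ℝ := anorm B (d (τ (k + 1))) with ha''
      set E : ℝ := Nb (τ (k + 1)) - Nb (τ k) - 1 / n * r (τ k) with hE
      have hE0 : 0 ≤ E := by
        have h2 := hr2 (τ k) (τ (k + 1))
        rw [hτsucc k] at h2
        simp only [hE]
        linarith
      have ha : a ≤ K * Nb (τ k) := by
        calc a ≤ K * ‖d (τ k)‖ := anorm_le_K B hK0 hK _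
          _ = K * Nb (τ k) := rfl
      have ha0 : 0 ≤ a := anorm_nonneg B hK0 hK _
      have ha'0 : 0 ≤ a' := anorm_nonneg B hK0 hK _
      have hmE : Nb (τ k) + 1 / n * r (τ k) = Nb (τ (k + 1)) - E := by
        simp only [hE]; ring
      have key : a * Nb (τ (k + 1)) ≤ a' * Nb (τ k) + a * E := by
        rw [hmE] at h1
        nlinarith
      have h4 : D ≤ 2 * K * Nb (τ (k + 1)) := by
        have := hnmin (τ (k + 1)) (hτmem _ hk).1 (hτmem _ hk).2
        rw [div_le_iff₀ (by positivity)] at this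
        linarith
      have hCD : C * D = 2 * K ^ 2 := by
        rw [hC]
        field_simp
      have hfinal : a * Nb (τ (k + 1)) ≤ a' * Nb (τ k) + C * E * (Nb (τ k) * Nb (τ (k + 1))) := by
        have h5 : a * E ≤ K * Nb (τ k) * E := mul_le_mul_of_nonneg_right ha hE0
        have h6 : K * Nb (τ k) * E * D ≤ K * Nb (τ k) * E * (2 * K * Nb (τ (k + 1))) := by
          apply mul_le_mul_of_nonneg_left h4
          positivity
        have h7 : K * Nb (τ k) * E * (2 * K * Nb (τ (k + 1))) =
            (C * D) * (E * (Nb (τ k) * Nb (τ (k + 1)))) := by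
          rw [hCD]; ring
        have h8 : a * E * D ≤ (C * E * (Nb (τ k) * Nb (τ (k + 1)))) * D := by
          calc a * E * D ≤ K * Nb (τ k) * E * D := by nlinarith
            _ ≤ (C * D) * (E * (Nb (τ k) * Nb (τ (k + 1)))) := by rw [← h7]; exact h6
            _ = (C * E * (Nb (τ k) * Nb (τ (k + 1)))) * D := by ring
        have h9 : a * E ≤ C * E * (Nb (τ k) * Nb (τ (k + 1))) :=
          le_of_mul_le_mul_right (by linarith [h8]) hDpos
        linarith
      show G k - C * E ≤ G (k + 1)
      rw [hG]
      rw [sub_le_iff_le_add, div_le_iff₀ hm]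
      have heq : (a' / Nb (τ (k + 1)) + C * E) * Nb (τ k) =
          (a' * Nb (τ k) + C * E * (Nb (τ k) * Nb (τ (k + 1)))) / Nb (τ (k + 1)) := by
        field_simp
      rw [heq, le_div_iff₀ hm']
      exact hfinal
    have hind : ∀ j : ℕ, j + 1 ≤ n →
        G 0 - C * ((Nb (τ (j + 1)) - Nb (τ j)) + ‖e‖ / n) ≤ G (j + 1) := by
      intro j
      induction j with
      | zero =>
        intro h1
        have h2 := hstep2 0 h1
        have hr0 : -‖e‖ ≤ r (τ 0) := (abs_le.mp (hr1 (τ 0))).1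
        have h3 : 1 / (n:ℝ) * (-‖e‖) ≤ 1 / n * r (τ 0) :=
          mul_le_mul_of_nonneg_left hr0 (by positivity)
        have h4 : C * (Nb (τ 1) - Nb (τ 0) - 1 / n * r (τ 0)) ≤
            C * ((Nb (τ 1) - Nb (τ 0)) + ‖e‖ / n) := by
          apply mul_le_mul_of_nonneg_left _ hCpos.le
          have : ‖e‖ / (n:ℝ) = 1 / n * ‖e‖ := by ring
          rw [this]
          linarith
        linarith
      | succ j ih =>
        intro h1
        have hj1 : j + 1 ≤ n := by omega
        have h2 := hstep2 (j + 1) h1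
        have ihh := ih hj1
        have h3 : Nb (τ (j + 1)) - Nb (τ j) ≤ (τ (j + 1) - τ j) * r (τ (j + 1)) :=
          hr3 (τ (j + 1)) (τ j) (hτlt j)
        rw [hτsucc j] at h3
        have h4 : C * ((Nb (τ (j + 1)) - Nb (τ j)) + ‖e‖ / n) +
            C * (Nb (τ (j + 2)) - Nb (τ (j + 1)) - 1 / n * r (τ (j + 1))) ≤
            C * ((Nb (τ (j + 2)) - Nb (τ (j + 1))) + ‖e‖ / n) := by
          rw [← mul_add]
          apply mul_le_mul_of_nonneg_left _ hCpos.le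
          linarith
        linarith
    have hfin := hind (n - 1) (by omega)
    have hn1 : (n - 1) + 1 = n := Nat.succ_pred_eq_of_pos hn
    rw [hn1] at hfin
    have hτ0 : τ 0 = 0 := by simp [hτ]
    have hτn : τ n = 1 := by
      rw [hτ]
      field_simp
    have hd0 : d 0 = x := by simp [hd]
    have hd1 : d 1 = y := by
      simp only [hd, one_smul, he]
      abel
    have hNb0 : Nb 0 = 1 := by rw [hNb]; simp only [hd0]; exact hx
    have hNb1 : Nb 1 = 1 := by rw [hNb]; simp only [hd1]; exact hy
    have hG0 : G 0 = anorm B x := by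
      rw [hG]
      simp only [hτ0, hd0, hNb0, div_one]
    have hGn : G n = anorm B y := by
      rw [hG]
      simp only [hτn, hd1, hNb1, div_one]
    have hττ : τ n - τ (n - 1) = 1 / n := by
      have h5 := hτsucc (n - 1)
      rw [hn1] at h5
      exact h5
    have hlast : Nb (τ n) - Nb (τ (n - 1)) ≤ ‖e‖ / n := by
      have h5 := hlip (τ n) (τ (n - 1))
      rw [hττ] at h5
      have h6 : |(1:ℝ) / n| = 1 / n := abs_of_pos (by positivity)
      rw [h6] at h5
      have h7 := le_abs_self (Nb (τ n) - Nb (τ (n - 1)))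
      have h8 : 1 / (n:ℝ) * ‖e‖ = ‖e‖ / n := by ring
      linarith
    rw [hG0, hGn] at hfin
    have h9 : C * ((Nb (τ n) - Nb (τ (n - 1))) + ‖e‖ / n) ≤ C * (‖e‖ / n + ‖e‖ / n) :=
      mul_le_mul_of_nonneg_left (by linarith) hCpos.le
    have h10 : C * (‖e‖ / (n:ℝ) + ‖e‖ / n) = 2 * C * ‖e‖ / n := by ring
    linarith
  -- conclusion
  by_contra hcon
  push_neg at hcon
  set ε : ℝ := anorm B x - anorm B y with hε
  have hεpos : 0 < ε := sub_pos.mpr hcon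
  obtain ⟨n, hnn⟩ := exists_nat_gt (2 * C * ‖e‖ / ε)
  have hnum : 0 ≤ 2 * C * ‖e‖ / ε := by positivity
  have hn0 : 0 < n := by
    rcases Nat.eq_zero_or_pos n with h0 | h0
    · subst h0
      simp only [Nat.cast_zero] at hnn
      linarith
    · exact h0
  have hnR' : (0:ℝ) < n := Nat.cast_pos.mpr hn0
  have h1 := hchain n hn0
  have h2 : 2 * C * ‖e‖ / n < ε := by
    rw [div_lt_iff₀ hnR']
    rw [div_lt_iff₀ hεpos] at hnn
    nlinarith
  linarith




-- ‖a‖ - ‖b‖ ≤ ‖a + b‖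
lemma norm_lb (a b : V) : ‖a‖ - ‖b‖ ≤ ‖a + b‖ := by
  have h := norm_add_le (a + b) (-b)
  simp only [add_neg_cancel_right, norm_neg] at h
  linarith

lemma om_ne_zero_of_unit {x y : V} (hx : ‖x‖ = 1) (hy : ‖y‖ = 1) (hxy : ‖x + y‖ = 1) :
    om B x y ≠ 0 := by
  intro h
  have hy0 : y ≠ 0 := by intro h0; rw [h0, norm_zero] at hy; norm_num at hy
  obtain ⟨c, hc⟩ := om_eq_zero_imp B hy0 h
  have h1 : |c| = 1 := by
    rw [hc, norm_smul, Real.norm_eq_abs, hy, mul_one] at hx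
    exact hx
  have h2 : x + y = (c + 1) • y := by rw [hc]; module
  have h3 : |c + 1| = 1 := by
    rw [h2, norm_smul, Real.norm_eq_abs, hy, mul_one] at hxy
    exact hxy
  rcases abs_eq (by norm_num : (0:ℝ) ≤ 1) |>.mp h1 with h4 | h4 <;>
    rw [h4] at h3 <;> norm_num at h3

lemma exists_min {x y : V} (hx : ‖x‖ = 1) (hy : ‖y‖ = 1) (hxy : ‖x + y‖ = 1) :
    ∃ t₀ : ℝ, 0 ≤ t₀ ∧ t₀ ≤ 1 ∧ (∀ t : ℝ, ‖x + t₀ • y‖ ≤ ‖x + t • y‖) ∧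
      sine x y = ‖x + t₀ • y‖ := by
  have hcont : Continuous fun t : ℝ => ‖x + t • y‖ :=
    (continuous_const.add (continuous_id.smul continuous_const)).norm
  obtain ⟨t₀, ht₀mem, ht₀min⟩ := isCompact_Icc.exists_isMinOn
    (Set.nonempty_Icc.mpr zero_le_one) hcont.continuousOn
  have hdecomp : ∀ t : ℝ, x + t • y = (1 - t) • x + t • (x + y) := by
    intro t; module
  have hglobal : ∀ t : ℝ, ‖x + t₀ • y‖ ≤ ‖x + t • y‖ := by
    intro t
    have hle1 : ‖x + t₀ • y‖ ≤ 1 := by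
      have h0 := ht₀min (Set.mem_Icc.mpr ⟨le_refl 0, zero_le_one⟩)
      simpa [hx] using h0
    rcases le_or_gt 0 t with h0 | h0
    · rcases le_or_gt t 1 with h1 | h1
      · exact ht₀min (Set.mem_Icc.mpr ⟨h0, h1⟩)
      · -- t > 1
        have hb : t - (t - 1) ≤ ‖x + t • y‖ := by
          have := norm_lb (t • (x + y)) ((1 - t) • x)
          rw [show t • (x + y) + (1 - t) • x = x + t • y by module] at this
          rw [norm_smul, norm_smul, Real.norm_eq_abs, Real.norm_eq_abs, hx, hxy,
            abs_of_pos (by linarith), abs_of_neg (by linarith : 1 - t < 0)] at this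
          linarith
        linarith
    · -- t < 0
      have hb : (1 - t) - (-t) ≤ ‖x + t • y‖ := by
        have := norm_lb ((1 - t) • x) (t • (x + y))
        rw [show (1 - t) • x + t • (x + y) = x + t • y by module] at this
        rw [norm_smul, norm_smul, Real.norm_eq_abs, Real.norm_eq_abs, hx, hxy,
          abs_of_pos (by linarith : (0:ℝ) < 1 - t), abs_of_neg h0] at this
        linarith
      linarith
  refine ⟨t₀, ht₀mem.1, ht₀mem.2, hglobal, ?_⟩
  refine le_antisymm (ciInf_le ⟨0, ?_⟩ t₀) (le_ciInf hglobal)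
  rintro r ⟨t, rfl⟩
  exact norm_nonneg _

lemma sine_formula {K : ℝ} (hK0 : 0 ≤ K) (hK : ∀ u v : V, |om B u v| ≤ K * ‖u‖ * ‖v‖)
    {x y : V} {t₀ : ℝ} (hmin : ∀ t : ℝ, ‖x + t₀ • y‖ ≤ ‖x + t • y‖)
    (hom : om B x y ≠ 0) :
    ‖x + t₀ • y‖ * anorm B y = |om B x y| ∧ 0 < ‖x + t₀ • y‖ := by
  set m : ℝ := ‖x + t₀ • y‖ with hm
  have hom2 : om B (x + t₀ • y) y = om B x y := by simp [om]; ring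
  have hmpos : 0 < m := by
    rcases (norm_nonneg (x + t₀ • y)).lt_or_eq with h | h
    · exact h
    · exfalso
      have hzero : x + t₀ • y = 0 := norm_eq_zero.mp h.symm
      apply hom
      rw [← hom2, hzero]
      simp [om]
  have hne : x + t₀ • y ≠ 0 := by
    intro h
    rw [hm, h, norm_zero] at hmpos
    exact lt_irrefl _ hmpos
  set u : V := m⁻¹ • (x + t₀ • y) with hu
  have hu1 : ‖u‖ = 1 := norm_smul_inv_norm hne
  have hBO : BOrth u y := by
    intro t
    have hvec : u + t • y = m⁻¹ • (x + (t₀ + m * t) • y) := by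
      rw [hu]
      match_scalars
      · field_simp
      · field_simp
    rw [hu1, hvec, norm_smul, Real.norm_eq_abs, abs_of_pos (inv_pos.mpr hmpos)]
    rw [show (1:ℝ) = m⁻¹ * m by field_simp]
    exact mul_le_mul_of_nonneg_left (hmin (t₀ + m * t)) (le_of_lt (inv_pos.mpr hmpos))
  have homu : om B u y = m⁻¹ * om B x y := by
    rw [hu, show om B (m⁻¹ • (x + t₀ • y)) y = m⁻¹ * om B (x + t₀ • y) y from by simp [om]; ring,
      hom2]
  have homune : om B u y ≠ 0 := by
    rw [homu]
    exact mul_ne_zero (inv_ne_zero (ne_of_gt hmpos)) hom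
  have hA := anorm_attain B hK0 hK hu1 hBO homune
  rw [homu, abs_mul, abs_of_pos (inv_pos.mpr hmpos)] at hA
  constructor
  · rw [hA]
    field_simp
  · exact hmpos

lemma keylem (hRadon : ∀ u v : V, BOrth u v → BOrth v u) {x y : V} (hx : ‖x‖ = 1) {a a' : ℝ}
    (ha : 0 ≤ a) (ha1 : a ≤ 1) (ha' : 0 ≤ a') (ha'1 : a' ≤ 1)
    (hmin' : ∀ s : ℝ, ‖y + a' • x‖ ≤ ‖y + s • x‖) :
    1 - a * a' ≤ ‖x + a • y‖ := by
  have haa : a * a' ≤ 1 := by nlinarith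
  rcases eq_or_lt_of_le haa with heq | hlt
  · rw [heq]
    simp only [sub_self]
    exact norm_nonneg _
  · set c : ℝ := a / (1 - a * a') with hc
    have hpos : 0 < 1 - a * a' := by linarith
    have hBOv : BOrth (y + a' • x) x := by
      intro t
      rw [show y + a' • x + t • x = y + (a' + t) • x by module]
      exact hmin' (a' + t)
    have hBOx : BOrth x (y + a' • x) := hRadon _ _ hBOv
    have h1 := hBOx c
    rw [hx] at h1
    have hc' : c * (1 - a * a') = a := by rw [hc]; exact div_mul_cancel₀ _ hpos.ne'
    have hvec : x + c • (y + a' • x) = (1 + c * a') • (x + a • y) := by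
      match_scalars <;> (field_simp [hc, hpos.ne']; try linear_combination hc')
    have h2 : 1 + c * a' = 1 / (1 - a * a') := by
      rw [hc, div_mul_eq_mul_div, eq_div_iff hpos.ne', add_mul, div_mul_cancel₀ _ hpos.ne']
      try ring
    rw [hvec, norm_smul, Real.norm_eq_abs, h2, abs_of_pos (by positivity)] at h1
    rw [div_mul_eq_mul_div, le_div_iff₀ hpos, one_mul] at h1
    linarith


lemma anorm_eq (hRadon : ∀ u v : V, BOrth u v → BOrth v u)
    {K : ℝ} (hKpos : 0 < K) (hK : ∀ u v : V, |om B u v| ≤ K * ‖u‖ * ‖v‖)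
    {x y : V} (hxy : om B x y ≠ 0) (hx : ‖x‖ = 1) (hy : ‖y‖ = 1) :
    anorm B x = anorm B y := by
  refine le_antisymm (anorm_mono B hRadon hKpos hK hxy hx hy) ?_
  have h2 : om B y (-x) ≠ 0 := by
    rw [show om B y (-x) = om B x y from by simp [om]; ring]
    exact hxy
  have h3 := anorm_mono B hRadon hKpos hK h2 hy (by rw [norm_neg]; exact hx)
  rw [anorm_neg] at h3
  exact h3

lemma final_arith {a b c s : ℝ} (ha0 : 0 ≤ a) (ha1 : a ≤ 1) (hb0 : 0 ≤ b) (hb1 : b ≤ 1)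
    (hc0 : 0 ≤ c) (hc1 : c ≤ 1)
    (h1 : 1 - a * (1 - c) ≤ s) (h2 : 1 - b * (1 - a) ≤ s) (h3 : 1 - c * (1 - b) ≤ s) :
    3 / 4 ≤ s := by
  by_contra hcon
  push_neg at hcon
  have p1 : 1 / 4 < a * (1 - c) := by linarith
  have p2 : 1 / 4 < b * (1 - a) := by linarith
  have p3 : 1 / 4 < c * (1 - b) := by linarith
  have q1 : a * (1 - a) ≤ 1 / 4 := by nlinarith [sq_nonneg (2 * a - 1)]
  have q2 : b * (1 - b) ≤ 1 / 4 := by nlinarith [sq_nonneg (2 * b - 1)]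
  have q3 : c * (1 - c) ≤ 1 / 4 := by nlinarith [sq_nonneg (2 * c - 1)]
  have m1 : 0 < a * (1 - c) := lt_trans (by norm_num) p1
  have m2 : 0 < b * (1 - a) := lt_trans (by norm_num) p2
  have big : 1 / 64 < (a * (1 - c)) * ((b * (1 - a)) * (c * (1 - b))) := by
    have inner : (1:ℝ)/4 * (1/4) < (b * (1-a)) * (c * (1-b)) :=
      mul_lt_mul' (le_of_lt p2) p3 (by norm_num) m2
    calc (1:ℝ)/64 = (1/4) * ((1/4) * (1/4)) := by norm_num
      _ < (a * (1-c)) * ((b * (1-a)) * (c * (1-b))) :=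
          mul_lt_mul' (le_of_lt p1) (by linarith) (by norm_num) m1
  have small : (a * (1 - c)) * ((b * (1 - a)) * (c * (1 - b))) ≤ 1 / 64 := by
    have e1 : (a * (1 - c)) * ((b * (1 - a)) * (c * (1 - b))) =
        (a * (1 - a)) * ((b * (1 - b)) * (c * (1 - c))) := by ring
    rw [e1]
    have n2 : 0 ≤ c * (1 - c) := by nlinarith
    calc (a * (1 - a)) * ((b * (1 - b)) * (c * (1 - c)))
        ≤ (1/4) * ((b * (1-b)) * (c * (1-c))) := by
          apply mul_le_mul_of_nonneg_right q1 (by nlinarith)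
      _ ≤ (1/4) * ((1/4) * (1/4)) := by
          apply mul_le_mul_of_nonneg_left _ (by norm_num)
          calc (b * (1-b)) * (c * (1-c)) ≤ (1/4) * (c * (1-c)) :=
                mul_le_mul_of_nonneg_right q2 n2
            _ ≤ (1/4) * (1/4) := mul_le_mul_of_nonneg_left q3 (by norm_num)
      _ = 1/64 := by norm_num
  linarith

end RadonSine

open RadonSine

set_option maxHeartbeats 1000000 in
theorem radon_equilateral_sine_ge (hV : finrank ℝ V = 2)
    (hRadon : ∀ x y : V, BOrth x y → BOrth y x)
    (x y z : V) (hx : ‖x‖ = 1) (hy : ‖y‖ = 1) (hz : ‖z‖ = 1)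
    (hsum : x + y + z = 0) : 3 / 4 ≤ sine x y := by
  haveI : FiniteDimensional ℝ V := FiniteDimensional.of_finrank_eq_succ hV
  obtain ⟨B⟩ : Nonempty (Basis (Fin 2) ℝ V) := ⟨Module.finBasisOfFinrankEq ℝ V hV⟩
  obtain ⟨K, hKpos, hK⟩ := om_bound B
  have hK0 : 0 ≤ K := hKpos.le
  have hzeq : z = -(x + y) := eq_neg_of_add_eq_zero_right hsum
  have hxy1 : ‖x + y‖ = 1 := by
    rw [show x + y = -z from by rw [hzeq]; module, norm_neg]
    exact hz
  have hyz1 : ‖y + z‖ = 1 := by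
    rw [show y + z = -x from by rw [hzeq]; module, norm_neg]
    exact hx
  have hzx1 : ‖z + x‖ = 1 := by
    rw [show z + x = -y from by rw [hzeq]; module, norm_neg]
    exact hy
  have homxy : om B x y ≠ 0 := om_ne_zero_of_unit B hx hy hxy1
  have homyz : om B y z = om B x y := by
    rw [hzeq]
    simp only [om, map_add, map_neg, Finsupp.add_apply, Finsupp.neg_apply]
    ring
  have homzx : om B z x = om B x y := by
    rw [hzeq]
    simp only [om, map_add, map_neg, Finsupp.add_apply, Finsupp.neg_apply]
    ring
  have homyz' : om B y z ≠ 0 := by rw [homyz]; exact homxy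
  have homzx' : om B z x ≠ 0 := by rw [homzx]; exact homxy
  obtain ⟨a, ha0, ha1, hamin, haeq⟩ := exists_min hx hy hxy1
  obtain ⟨b, hb0, hb1, hbmin, hbeq⟩ := exists_min hy hz hyz1
  obtain ⟨c, hc0, hc1, hcmin, hceq⟩ := exists_min hz hx hzx1
  obtain ⟨hfxy, hpxy⟩ := sine_formula B hK0 hK hamin homxy
  obtain ⟨hfyz, hpyz⟩ := sine_formula B hK0 hK hbmin homyz'
  obtain ⟨hfzx, hpzx⟩ := sine_formula B hK0 hK hcmin homzx'
  have hA1 : anorm B x = anorm B y := anorm_eq B hRadon hKpos hK homxy hx hy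
  have hA2 : anorm B y = anorm B z := anorm_eq B hRadon hKpos hK homyz' hy hz
  have hAypos : 0 < anorm B y :=
    lt_of_lt_of_le (abs_pos.mpr homxy) (le_anorm B hK0 hK (le_of_eq hx) y)
  -- all three sines are equal
  have heq1 : ‖y + b • z‖ = ‖x + a • y‖ := by
    apply mul_right_cancel₀ (ne_of_gt hAypos)
    calc ‖y + b • z‖ * anorm B y = ‖y + b • z‖ * anorm B z := by rw [hA2]
      _ = |om B y z| := hfyz
      _ = |om B x y| := by rw [homyz]
      _ = ‖x + a • y‖ * anorm B y := hfxy.symm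
  have heq2 : ‖z + c • x‖ = ‖x + a • y‖ := by
    apply mul_right_cancel₀ (ne_of_gt hAypos)
    calc ‖z + c • x‖ * anorm B y = ‖z + c • x‖ * anorm B x := by rw [hA1]
      _ = |om B z x| := hfzx
      _ = |om B x y| := by rw [homzx]
      _ = ‖x + a • y‖ * anorm B y := hfxy.symm
  -- the three Radon key bounds
  have hminyx : ∀ s : ℝ, ‖y + (1 - c) • x‖ ≤ ‖y + s • x‖ := by
    intro s
    have hident : ∀ s : ℝ, y + s • x = -(z + (1 - s) • x) := by
      intro s; rw [hzeq]; module
    rw [hident s, hident (1 - c), norm_neg, norm_neg, show (1:ℝ) - (1 - c) = c by ring]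
    exact hcmin (1 - s)
  have hkey1 := keylem hRadon hx ha0 ha1 (by linarith : (0:ℝ) ≤ 1 - c)
    (by linarith : 1 - c ≤ 1) hminyx
  have hminzy : ∀ s : ℝ, ‖z + (1 - a) • y‖ ≤ ‖z + s • y‖ := by
    intro s
    have hident : ∀ s : ℝ, z + s • y = -(x + (1 - s) • y) := by
      intro s; rw [hzeq]; module
    rw [hident s, hident (1 - a), norm_neg, norm_neg, show (1:ℝ) - (1 - a) = a by ring]
    exact hamin (1 - s)
  have hkey2 := keylem hRadon hy hb0 hb1 (by linarith : (0:ℝ) ≤ 1 - a)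
    (by linarith : 1 - a ≤ 1) hminzy
  have hminxz : ∀ s : ℝ, ‖x + (1 - b) • z‖ ≤ ‖x + s • z‖ := by
    intro s
    have hident : ∀ s : ℝ, x + s • z = -(y + (1 - s) • z) := by
      intro s; rw [hzeq]; module
    rw [hident s, hident (1 - b), norm_neg, norm_neg, show (1:ℝ) - (1 - b) = b by ring]
    exact hbmin (1 - s)
  have hkey3 := keylem hRadon hz hc0 hc1 (by linarith : (0:ℝ) ≤ 1 - b)
    (by linarith : 1 - b ≤ 1) hminxz
  rw [heq1] at hkey2
  rw [heq2] at hkey3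
  rw [haeq]
  exact final_arith ha0 ha1 hb0 hb1 hc0 hc1 hkey1 hkey2 hkey3
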